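/- arXiv:1810.12772 — 2 statements merged into one kernel-verified Lean document; each statement's English description precedes it below -/
import Mathlib

section
/- Let n ≥ 1 be an integer, let t ∈ ℝ, h > 0, and let b₁, …, b_n ∈ [0, 1). Then, writing s₀ := t, the integral of the function s ↦ ∏_{j=1}^n (s_j − s_{j−1})^{−b_j} over the simplex {s ∈ ℝⁿ : t < s₁ < s₂ < ⋯ < s_n < t + h} (with respect to n-dimensional Lebesgue measure) equals h^{n − (b₁ + ⋯ + b_n)} · (∏_{j=1}^n Γ(1 − b_j)) / Γ(n + 1 − (b₁ + ⋯ + b_n)). -/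
open MeasureTheory
open intervalIntegral Set ENNReal



lemma rbeta_left {p q : ℝ} (hp : 0 < p) {a : ℝ} (ha : 0 < a) :
    IntervalIntegrable (fun x => x ^ (p - 1) * (a - x) ^ (q - 1)) volume 0 (a / 2) := by
  apply IntervalIntegrable.mul_continuousOn
  · exact intervalIntegral.intervalIntegrable_rpow' (by linarith)
  · apply continuousOn_of_forall_continuousAt
    intro x hx
    rw [uIcc_of_le (by positivity : (0:ℝ) ≤ a / 2)] at hx
    have : a - x ≠ 0 := by
      have := hx.2; intro hc; nlinarith
    exact ((continuous_const.sub continuous_id).continuousAt).rpow_const (Or.inl this)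

lemma rbeta_integrable {p q : ℝ} (hp : 0 < p) (hq : 0 < q) {a : ℝ} (ha : 0 < a) :
    IntervalIntegrable (fun x => x ^ (p - 1) * (a - x) ^ (q - 1)) volume 0 a := by
  refine (rbeta_left hp ha).trans (a := 0) (b := a/2) (c := a) ?_
  have h2 : IntervalIntegrable (fun x => x ^ (q - 1) * (a - x) ^ (p - 1)) volume 0 (a / 2) :=
    rbeta_left hq ha
  have := (h2.comp_sub_left a).symm
  simp only [sub_zero] at this
  have e1 : a - a / 2 = a / 2 := by ring
  rw [e1] at this
  have e2 : (fun x : ℝ => (a - x) ^ (q - 1) * (a - (a - x)) ^ (p - 1))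
      = fun x => x ^ (p - 1) * (a - x) ^ (q - 1) := by
    funext x; rw [_root_.sub_sub_cancel, mul_comm]
  rwa [e2] at this

lemma rbeta_value {p q : ℝ} (hp : 0 < p) (hq : 0 < q) {a : ℝ} (ha : 0 < a) :
    ∫ x in (0:ℝ)..a, x ^ (p - 1) * (a - x) ^ (q - 1)
      = a ^ (p + q - 1) * (Real.Gamma p * Real.Gamma q / Real.Gamma (p + q)) := by
  have hpq : (0:ℝ) < p + q := by linarith
  have hGR : (0:ℝ) < Real.Gamma (p + q) := Real.Gamma_pos_of_pos hpq
  have hG : Complex.Gamma ((p:ℂ) + q) ≠ 0 := by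
    rw [show ((p:ℂ) + q) = ((p + q : ℝ) : ℂ) by push_cast; ring, Complex.Gamma_ofReal]
    exact_mod_cast hGR.ne'
  have hbeta : Complex.betaIntegral p q
      = Complex.Gamma p * Complex.Gamma q / Complex.Gamma ((p:ℂ) + q) := by
    rw [eq_div_iff hG, mul_comm (Complex.betaIntegral _ _)]
    exact (Complex.Gamma_mul_Gamma_eq_betaIntegral (by simpa) (by simpa)).symm
  have hscaled := Complex.betaIntegral_scaled p q ha
  rw [hbeta] at hscaled
  have hcongr : ∫ x in (0:ℝ)..a, ((x ^ (p - 1) * (a - x) ^ (q - 1) : ℝ) : ℂ)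
      = ∫ x in (0:ℝ)..a, (x : ℂ) ^ ((p:ℂ) - 1) * ((a : ℂ) - x) ^ ((q:ℂ) - 1) := by
    refine intervalIntegral.integral_congr fun x hx => ?_
    rw [uIcc_of_le ha.le] at hx
    rw [Complex.ofReal_mul, Complex.ofReal_cpow hx.1 (p - 1),
      Complex.ofReal_cpow (by linarith [hx.2] : (0:ℝ) ≤ a - x) (q - 1)]
    push_cast
    ring
  rw [intervalIntegral.integral_ofReal] at hcongr
  have : ((∫ x in (0:ℝ)..a, x ^ (p - 1) * (a - x) ^ (q - 1) : ℝ) : ℂ)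
      = ((a ^ (p + q - 1) * (Real.Gamma p * Real.Gamma q / Real.Gamma (p + q)) : ℝ) : ℂ) := by
    rw [hcongr, hscaled, Complex.ofReal_mul, Complex.ofReal_cpow ha.le (p + q - 1),
      Complex.ofReal_div, Complex.ofReal_mul, Complex.Gamma_ofReal, Complex.Gamma_ofReal,
      show ((p:ℂ) + q) = ((p + q : ℝ) : ℂ) by push_cast; ring, Complex.Gamma_ofReal]
    push_cast
    ring
  exact_mod_cast this

lemma corner_measurableSet (n : ℕ) (h : ℝ) :
    MeasurableSet {u : Fin n → ℝ | (∀ j, 0 < u j) ∧ ∑ j, u j < h} := by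
  have h1 : MeasurableSet {u : Fin n → ℝ | ∀ j, 0 < u j} := by
    rw [Set.setOf_forall]
    exact MeasurableSet.iInter fun j => measurableSet_lt measurable_const (measurable_pi_apply j)
  have h2 : MeasurableSet {u : Fin n → ℝ | ∑ j, u j < h} :=
    measurableSet_lt (Finset.measurable_sum _ fun j _ => measurable_pi_apply j) measurable_const
  exact h1.inter h2



lemma corner_lintegral (n : ℕ) (b : Fin n → ℝ) (hb : ∀ j, b j < 1) (h : ℝ) (hh : 0 < h) :
    (∫⁻ u in {u : Fin n → ℝ | (∀ j, 0 < u j) ∧ ∑ j, u j < h},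
        ∏ j, ENNReal.ofReal ((u j) ^ (-(b j))))
      = ENNReal.ofReal (h ^ ((n:ℝ) - ∑ j, b j) * ((∏ j, Real.Gamma (1 - b j)) /
          Real.Gamma ((n:ℝ) + 1 - ∑ j, b j))) := by
  induction n generalizing h with
  | zero =>
    have hset : {u : Fin 0 → ℝ | (∀ j, 0 < u j) ∧ ∑ j, u j < h} = Set.univ := by
      ext u
      simp [hh]
    rw [hset, Measure.restrict_univ]
    simp only [Finset.univ_eq_empty, Finset.prod_empty, lintegral_one]
    have : (volume : Measure (Fin 0 → ℝ)) Set.univ = 1 := by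
      simp [volume_pi, Measure.pi_univ]
    rw [this]
    norm_num [Real.Gamma_one]
  | succ n IH =>
    classical
    set b0 : ℝ := b 0 with hb0def
    set bt : Fin n → ℝ := b ∘ Fin.succ with hbtdef
    have hbt : ∀ j, bt j < 1 := fun j => hb _
    have hb0 : b0 < 1 := hb 0
    set S : ℝ := ∑ j, bt j with hSdef
    have hsum : ∑ j, b j = b0 + S := Fin.sum_univ_succ b
    have hSn : S ≤ n := by
      calc S ≤ ∑ _j : Fin n, (1:ℝ) := Finset.sum_le_sum fun j _ => (hbt j).le
      _ = n := by simp
    set p : ℝ := 1 - b0 with hpdef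
    set q : ℝ := (n:ℝ) + 1 - S with hqdef
    have hp : 0 < p := by simp only [hpdef]; linarith
    have hq : 0 < q := by simp only [hqdef]; linarith
    set A := {u : Fin (n+1) → ℝ | (∀ j, 0 < u j) ∧ ∑ j, u j < h} with hAdef
    have hAm : MeasurableSet A := corner_measurableSet (n+1) h
    set f : (Fin (n+1) → ℝ) → ℝ≥0∞ := fun u => ∏ j, ENNReal.ofReal ((u j) ^ (-(b j))) with hfdef
    have hfm : Measurable f := by
      apply Finset.measurable_prod
      intro j _
      apply Measurable.ennreal_ofReal
      fun_prop
    -- inner corner sets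
    set B : ℝ → Set (Fin n → ℝ) :=
      fun x => {y : Fin n → ℝ | (∀ j, 0 < y j) ∧ ∑ j, y j < h - x} with hBdef
    have hBm : ∀ x, MeasurableSet (B x) := fun x => corner_measurableSet n (h - x)
    set g : (Fin n → ℝ) → ℝ≥0∞ := fun y => ∏ j, ENNReal.ofReal ((y j) ^ (-(bt j))) with hgdef
    have hgm : Measurable g := by
      apply Finset.measurable_prod
      intro j _
      apply Measurable.ennreal_ofReal
      fun_prop
    -- key pointwise identity
    have key : ∀ (x : ℝ) (y : Fin n → ℝ),
        A.indicator f (Fin.cons x y) =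
          (Set.Ioi (0:ℝ)).indicator (fun x => ENNReal.ofReal (x ^ (-b0))) x *
            (B x).indicator g y := by
      intro x y
      by_cases hmem : Fin.cons x y ∈ A
      · have hpos := hmem.1
        have hsum' := hmem.2
        have hx : 0 < x := by simpa using hpos 0
        have hy : ∀ j, 0 < y j := fun j => by simpa using hpos j.succ
        have hsy : ∑ j, y j < h - x := by
          rw [Fin.sum_cons] at hsum'; linarith
        rw [Set.indicator_of_mem hmem, Set.indicator_of_mem (Set.mem_Ioi.2 hx),
          Set.indicator_of_mem (show y ∈ B x from ⟨hy, hsy⟩)]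
        simp only [hfdef, hgdef, Fin.prod_univ_succ, Fin.cons_zero, Fin.cons_succ]
        rfl
      · rw [Set.indicator_of_notMem hmem]
        by_cases hx : x ∈ Set.Ioi (0:ℝ)
        · by_cases hy : y ∈ B x
          · exact absurd ⟨fun j => Fin.cases hx (fun i => (hy.1 i)) j,
              by rw [Fin.sum_cons]; have := hy.2; linarith⟩ hmem
          · rw [Set.indicator_of_notMem hy, mul_zero]
        · rw [Set.indicator_of_notMem hx, zero_mul]
    -- transfer to the product space
    have mp := (MeasureTheory.volume_preserving_piFinSuccAbove (fun _ : Fin (n+1) => ℝ) 0).symm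
    have step2 : (∫⁻ u in A, f u) = ∫⁻ x : ℝ, ∫⁻ y : Fin n → ℝ,
        A.indicator f (Fin.cons x y) := by
      rw [← lintegral_indicator hAm f, ← mp.lintegral_comp (hfm.indicator hAm)]
      have hcm : Measurable (fun z : ℝ × (Fin n → ℝ) =>
          A.indicator f ((MeasurableEquiv.piFinSuccAbove (fun _ : Fin (n+1) => ℝ) 0).symm z)) :=
        (hfm.indicator hAm).comp (MeasurableEquiv.measurable _)
      rw [Measure.volume_eq_prod, lintegral_prod _ hcm.aemeasurable]
      refine lintegral_congr fun x => lintegral_congr fun y => ?_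
      congr 1
      show (MeasurableEquiv.piFinSuccAbove (fun _ : Fin (n+1) => ℝ) 0).symm (x, y)
        = Fin.cons x y
      simp [MeasurableEquiv.piFinSuccAbove_symm_apply, Fin.insertNthEquiv, Fin.insertNth_zero']
    rw [step2]
    set J : ℝ → ℝ≥0∞ := fun x => ∫⁻ y in B x, g y with hJdef
    have inner : ∀ x : ℝ, (∫⁻ y, A.indicator f (Fin.cons x y))
        = (Set.Ioi (0:ℝ)).indicator (fun x => ENNReal.ofReal (x ^ (-b0))) x * J x := by
      intro x
      simp_rw [key x]
      rw [lintegral_const_mul _ (hgm.indicator (hBm x)), lintegral_indicator (hBm x)]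
    rw [lintegral_congr inner]
    set C' : ℝ := (∏ j, Real.Gamma (1 - bt j)) / Real.Gamma ((n:ℝ) + 1 - S) with hC'def
    have hΓq : 0 < Real.Gamma ((n:ℝ) + 1 - S) := Real.Gamma_pos_of_pos hq
    have hC' : 0 ≤ C' :=
      div_nonneg (Finset.prod_nonneg fun j _ =>
        (Real.Gamma_pos_of_pos (by linarith [hbt j])).le) hΓq.le
    have hJ1 : ∀ x ∈ Set.Ioo (0:ℝ) h, J x = ENNReal.ofReal ((h - x) ^ ((n:ℝ) - S) * C') := by
      intro x hx
      exact IH bt hbt (h - x) (by linarith [hx.2])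
    have hJ2 : ∀ x ∈ Set.Ici h, J x = 0 := by
      intro x hx
      have hBempty : B x = ∅ := by
        ext y
        simp only [Set.mem_empty_iff_false, iff_false, hBdef, Set.mem_setOf_eq]
        rintro ⟨h1, h2⟩
        have h3 : 0 ≤ ∑ j, y j := Finset.sum_nonneg fun j _ => (h1 j).le
        have := Set.mem_Ici.mp hx
        linarith
      rw [hJdef]
      simp only [hBempty, Measure.restrict_empty, lintegral_zero_measure]
    have out1 : (∫⁻ x : ℝ, (Set.Ioi (0:ℝ)).indicator (fun x => ENNReal.ofReal (x ^ (-b0))) x * J x)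
        = ∫⁻ x in Set.Ioi (0:ℝ), ENNReal.ofReal (x ^ (-b0)) * J x := by
      rw [← lintegral_indicator measurableSet_Ioi]
      refine lintegral_congr fun x => ?_
      by_cases hx : x ∈ Set.Ioi (0:ℝ)
      · rw [Set.indicator_of_mem hx, Set.indicator_of_mem hx]
      · rw [Set.indicator_of_notMem hx, Set.indicator_of_notMem hx, zero_mul]
    rw [out1, ← Set.Ioo_union_Ici_eq_Ioi hh, lintegral_union measurableSet_Ici
      (Set.disjoint_left.2 fun x hx1 hx2 => absurd hx1.2 (not_lt.2 hx2))]
    have out2 : (∫⁻ x in Set.Ici h, ENNReal.ofReal (x ^ (-b0)) * J x) = 0 := by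
      rw [setLIntegral_congr_fun measurableSet_Ici
        (fun x hx => by rw [hJ2 x hx, mul_zero])]
      simp
    rw [out2, add_zero]
    have out3 : (∫⁻ x in Set.Ioo (0:ℝ) h, ENNReal.ofReal (x ^ (-b0)) * J x)
        = ∫⁻ x in Set.Ioo (0:ℝ) h,
            ENNReal.ofReal (x ^ (p - 1) * ((h - x) ^ (q - 1) * C')) := by
      refine setLIntegral_congr_fun measurableSet_Ioo (fun x hx => ?_)
      rw [hJ1 x hx, ← ENNReal.ofReal_mul (Real.rpow_nonneg hx.1.le _)]
      congr 2
      · rw [hpdef]; ring_nf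
      · rw [hqdef]; ring_nf
    rw [out3]
    have hIntBase : IntegrableOn (fun x => x ^ (p - 1) * (h - x) ^ (q - 1))
        (Set.Ioo (0:ℝ) h) volume := by
      have := (intervalIntegrable_iff_integrableOn_Ioc_of_le hh.le).mp
        (rbeta_integrable hp hq hh)
      exact this.mono_set Set.Ioo_subset_Ioc_self
    have hfuneq : (fun x : ℝ => x ^ (p - 1) * ((h - x) ^ (q - 1) * C'))
        = fun x => (x ^ (p - 1) * (h - x) ^ (q - 1)) * C' := by
      funext x; ring
    have hInt : IntegrableOn (fun x : ℝ => x ^ (p - 1) * ((h - x) ^ (q - 1) * C'))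
        (Set.Ioo (0:ℝ) h) volume := by
      rw [hfuneq]; exact hIntBase.mul_const C'
    have hnn : 0 ≤ᵐ[volume.restrict (Set.Ioo (0:ℝ) h)]
        fun x : ℝ => x ^ (p - 1) * ((h - x) ^ (q - 1) * C') := by
      filter_upwards [ae_restrict_mem measurableSet_Ioo] with x hx
      exact mul_nonneg (Real.rpow_nonneg hx.1.le _)
        (mul_nonneg (Real.rpow_nonneg (by linarith [hx.2]) _) hC')
    rw [← ofReal_integral_eq_lintegral_ofReal hInt hnn]
    have hval : (∫ x in Set.Ioo (0:ℝ) h, x ^ (p - 1) * ((h - x) ^ (q - 1) * C'))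
        = h ^ (p + q - 1) * (Real.Gamma p * Real.Gamma q / Real.Gamma (p + q)) * C' := by
      rw [← integral_Ioc_eq_integral_Ioo, ← intervalIntegral.integral_of_le hh.le, hfuneq,
        intervalIntegral.integral_mul_const, rbeta_value hp hq hh]
    rw [hval]
    congr 1
    have hE : p + q - 1 = ((n+1:ℕ):ℝ) - ∑ j, b j := by
      rw [hpdef, hqdef, hsum]; push_cast; ring
    have hGarg : ((n+1:ℕ):ℝ) + 1 - ∑ j, b j = p + q := by
      rw [hpdef, hqdef, hsum]; push_cast; ring
    have hprod : (∏ j : Fin (n+1), Real.Gamma (1 - b j))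
        = Real.Gamma p * ∏ j, Real.Gamma (1 - bt j) := by
      rw [Fin.prod_univ_succ, hpdef]
      rfl
    rw [hE, hGarg, hprod, hC'def]
    have hq2 : Real.Gamma q = Real.Gamma ((n:ℝ) + 1 - S) := by rw [hqdef]
    rw [← hq2]
    have hΓq' : Real.Gamma q ≠ 0 := by rw [hq2]; exact hΓq.ne'
    field_simp



noncomputable def Tmap (n : ℕ) (t : ℝ) : (Fin n → ℝ) → (Fin n → ℝ) :=
  fun u j => t + ∑ i ∈ Finset.Iic j, u i

lemma measurePreserving_Tmap (n : ℕ) (t : ℝ) :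
    MeasurePreserving (Tmap n t) (volume : Measure (Fin n → ℝ)) volume := by
  classical
  set M : Matrix (Fin n) (Fin n) ℝ := Matrix.of fun j i : Fin n => if i ≤ j then (1:ℝ) else 0
    with hMdef
  have hLapp : ∀ (v : Fin n → ℝ) (j : Fin n),
      Matrix.toLin' M v j = ∑ i ∈ Finset.Iic j, v i := by
    intro v j
    rw [Matrix.toLin'_apply]
    show (∑ i, M j i * v i) = _
    have : ∀ i : Fin n, M j i * v i = if i ∈ Finset.Iic j then v i else 0 := by
      intro i
      by_cases hij : i ≤ j <;> simp [hMdef, hij, Finset.mem_Iic]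
    rw [Finset.sum_congr rfl fun i _ => this i, Finset.sum_ite_mem, Finset.univ_inter]
  have hdet : LinearMap.det (Matrix.toLin' M) = 1 := by
    rw [LinearMap.det_toLin', Matrix.det_of_lowerTriangular M ?_]
    · simp [hMdef]
    · intro i j hij
      have : i < j := hij
      simp [hMdef, not_le.2 this, (LT.lt.not_ge this : ¬ j ≤ i)]
  have hmeas : Measurable (Matrix.toLin' M : (Fin n → ℝ) →ₗ[ℝ] (Fin n → ℝ)) :=
    (LinearMap.continuous_of_finiteDimensional _).measurable
  have mpL : MeasurePreserving (Matrix.toLin' M : (Fin n → ℝ) →ₗ[ℝ] (Fin n → ℝ))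
      volume volume := by
    refine ⟨hmeas, ?_⟩
    rw [Real.map_linearMap_volume_pi_eq_smul_volume_pi (by rw [hdet]; exact one_ne_zero), hdet]
    simp
  have mpT := MeasurePreserving.add_left volume ((fun _ => t) : Fin n → ℝ) mpL
  have heq : (fun u => ((fun _ => t) : Fin n → ℝ) + Matrix.toLin' M u) = Tmap n t := by
    funext u
    funext j
    show t + Matrix.toLin' M u j = _
    rw [hLapp]
    rfl
  rwa [heq] at mpT

lemma Tmap_increment (m : ℕ) (t : ℝ) (u : Fin (m+1) → ℝ) (j : Fin (m+1)) :
    Tmap (m+1) t u j -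
      (if hj : (j:ℕ) = 0 then t else Tmap (m+1) t u ⟨(j:ℕ)-1, by omega⟩) = u j := by
  by_cases hj : (j:ℕ) = 0
  · rw [dif_pos hj]
    show (t + ∑ i ∈ Finset.Iic j, u i) - t = u j
    have hsing : ∑ i ∈ Finset.Iic j, u i = u j := by
      refine Finset.sum_eq_single_of_mem j (Finset.mem_Iic.2 le_rfl) fun i hi hne => ?_
      exfalso
      have h1 : (i:ℕ) ≤ (j:ℕ) := Fin.le_def.mp (Finset.mem_Iic.1 hi)
      have h2 : (i:ℕ) = (j:ℕ) := by omega
      exact hne (Fin.ext h2)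
    rw [hsing]; ring
  · rw [dif_neg hj]
    set j' : Fin (m+1) := ⟨(j:ℕ)-1, by omega⟩ with hj'def
    show (t + ∑ i ∈ Finset.Iic j, u i) - (t + ∑ i ∈ Finset.Iic j', u i) = u j
    have hins : Finset.Iic j = insert j (Finset.Iic j') := by
      ext i
      simp only [Finset.mem_Iic, Finset.mem_insert, Fin.le_def, Fin.ext_iff, hj'def]
      omega
    have hnotmem : j ∉ Finset.Iic j' := by
      simp only [Finset.mem_Iic, Fin.le_def, hj'def]
      omega
    rw [hins, Finset.sum_insert hnotmem]
    ring

lemma Tmap_preimage (m : ℕ) (t h : ℝ) :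
    Tmap (m+1) t ⁻¹' {s : Fin (m+1) → ℝ | StrictMono s ∧ ∀ j, s j ∈ Set.Ioo t (t + h)}
      = {u : Fin (m+1) → ℝ | (∀ j, 0 < u j) ∧ ∑ j, u j < h} := by
  ext u
  simp only [Set.mem_preimage, Set.mem_setOf_eq]
  constructor
  · rintro ⟨hsm, hio⟩
    constructor
    · intro j
      have hinc := Tmap_increment m t u j
      by_cases hj : (j:ℕ) = 0
      · rw [dif_pos hj] at hinc
        have := (hio j).1
        linarith [hinc]
      · rw [dif_neg hj] at hinc
        have hlt : (⟨(j:ℕ)-1, by omega⟩ : Fin (m+1)) < j := by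
          rw [Fin.lt_def]; show (j:ℕ) - 1 < (j:ℕ); omega
        have := hsm hlt
        linarith [hinc]
    · have huniv : Finset.Iic (Fin.last m) = Finset.univ := by
        ext i; simp [Finset.mem_Iic, Fin.le_last]
      have hlast : Tmap (m+1) t u (Fin.last m) = t + ∑ j, u j := by
        show t + ∑ i ∈ Finset.Iic (Fin.last m), u i = _
        rw [huniv]
      have := (hio (Fin.last m)).2
      rw [hlast] at this
      linarith
  · rintro ⟨hu, hsum⟩
    have hmemIoo : ∀ j, Tmap (m+1) t u j ∈ Set.Ioo t (t + h) := by
      intro j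
      constructor
      · show t < t + ∑ i ∈ Finset.Iic j, u i
        have : 0 < ∑ i ∈ Finset.Iic j, u i :=
          Finset.sum_pos (fun i _ => hu i) ⟨j, Finset.mem_Iic.2 le_rfl⟩
        linarith
      · show t + ∑ i ∈ Finset.Iic j, u i < t + h
        have hle : ∑ i ∈ Finset.Iic j, u i ≤ ∑ i, u i :=
          Finset.sum_le_sum_of_subset_of_nonneg (Finset.subset_univ _)
            (fun i _ _ => (hu i).le)
        linarith
    refine ⟨?_, hmemIoo⟩
    rw [Fin.strictMono_iff_lt_succ]
    intro i
    have hinc := Tmap_increment m t u i.succ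
    have hne : ((i.succ : Fin (m+1)) : ℕ) ≠ 0 := by simp
    rw [dif_neg hne] at hinc
    have hcast : (⟨((i.succ : Fin (m+1)) : ℕ) - 1, by omega⟩ : Fin (m+1)) = i.castSucc := by
      apply Fin.ext; simp
    rw [hcast] at hinc
    have := hu i.succ
    linarith

/-- Dirichlet-type integral over the simplex `{t < s₁ < ⋯ < sₙ < t + h}`:
with `s₀ := t`, the integral of `∏ⱼ (sⱼ - sⱼ₋₁)^(-bⱼ)` equals
`h^(n - ∑ bⱼ) · (∏ⱼ Γ(1 - bⱼ)) / Γ(n + 1 - ∑ bⱼ)`. -/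
theorem simplex_dirichlet_integral (n : ℕ) (hn : 1 ≤ n) (t h : ℝ) (hh : 0 < h)
    (b : Fin n → ℝ) (hb : ∀ j, b j ∈ Set.Ico (0 : ℝ) 1) :
    (∫ s in {s : Fin n → ℝ | StrictMono s ∧ ∀ j, s j ∈ Set.Ioo t (t + h)},
        ∏ j : Fin n,
          (s j - (if hj : (j : ℕ) = 0 then t else s ⟨(j : ℕ) - 1, by omega⟩)) ^ (-(b j)))
      = h ^ ((n : ℝ) - ∑ j, b j) * (∏ j, Real.Gamma (1 - b j)) /
          Real.Gamma ((n : ℝ) + 1 - ∑ j, b j) := by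
  obtain ⟨m, rfl⟩ : ∃ m, n = m + 1 := ⟨n - 1, by omega⟩
  set Sx := {s : Fin (m+1) → ℝ | StrictMono s ∧ ∀ j, s j ∈ Set.Ioo t (t + h)} with hSxdef
  have hSxm : MeasurableSet Sx := by
    have h1 : MeasurableSet {s : Fin (m+1) → ℝ | StrictMono s} := by
      have : {s : Fin (m+1) → ℝ | StrictMono s}
          = ⋂ (i : Fin (m+1)) (j : Fin (m+1)) (_ : i < j), {s | s i < s j} := by
        ext s
        simp only [Set.mem_setOf_eq, Set.mem_iInter]
        exact ⟨fun hs i j hij => hs hij, fun hs i j hij => hs i j hij⟩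
      rw [this]
      exact MeasurableSet.iInter fun i => MeasurableSet.iInter fun j =>
        MeasurableSet.iInter fun _ =>
          measurableSet_lt (measurable_pi_apply i) (measurable_pi_apply j)
    have h2 : MeasurableSet {s : Fin (m+1) → ℝ | ∀ j, s j ∈ Set.Ioo t (t + h)} := by
      rw [Set.setOf_forall]
      exact MeasurableSet.iInter fun j =>
        (measurable_pi_apply j) measurableSet_Ioo
    exact h1.inter h2
  have hinc : ∀ s ∈ Sx, ∀ j : Fin (m+1),
      0 < s j - (if hj : (j:ℕ) = 0 then t else s ⟨(j:ℕ)-1, by omega⟩) := by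
    intro s hs j
    by_cases hj : (j:ℕ) = 0
    · rw [dif_pos hj]
      have := (hs.2 j).1
      linarith
    · rw [dif_neg hj]
      have hlt : (⟨(j:ℕ)-1, by omega⟩ : Fin (m+1)) < j := by
        rw [Fin.lt_def]; show (j:ℕ) - 1 < (j:ℕ); omega
      have := hs.1 hlt
      linarith
  have hfRm : Measurable (fun s : Fin (m+1) → ℝ => ∏ j : Fin (m+1),
      (s j - (if hj : (j:ℕ) = 0 then t else s ⟨(j:ℕ)-1, by omega⟩)) ^ (-(b j))) := by
    apply Finset.measurable_prod
    intro j _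
    by_cases hj : (j:ℕ) = 0
    · simp only [dif_pos hj]; fun_prop
    · simp only [dif_neg hj]; fun_prop
  rw [MeasureTheory.integral_eq_lintegral_of_nonneg_ae ?nn ?meas]
  case nn =>
    filter_upwards [ae_restrict_mem hSxm] with s hs
    exact Finset.prod_nonneg fun j _ => Real.rpow_nonneg (hinc s hs j).le _
  case meas => exact hfRm.aestronglyMeasurable.restrict
  have e1 : (∫⁻ s in Sx, ENNReal.ofReal (∏ j : Fin (m+1),
        (s j - (if hj : (j:ℕ) = 0 then t else s ⟨(j:ℕ)-1, by omega⟩)) ^ (-(b j))))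
      = ∫⁻ s in Sx, ∏ j : Fin (m+1), ENNReal.ofReal
          ((s j - (if hj : (j:ℕ) = 0 then t else s ⟨(j:ℕ)-1, by omega⟩)) ^ (-(b j))) := by
    refine setLIntegral_congr_fun hSxm (fun s hs => ?_)
    exact ENNReal.ofReal_prod_of_nonneg fun j _ => Real.rpow_nonneg (hinc s hs j).le _
  rw [e1]
  have hGm : Measurable (fun s : Fin (m+1) → ℝ => ∏ j : Fin (m+1), ENNReal.ofReal
      ((s j - (if hj : (j:ℕ) = 0 then t else s ⟨(j:ℕ)-1, by omega⟩)) ^ (-(b j)))) := by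
    apply Finset.measurable_prod
    intro j _
    apply Measurable.ennreal_ofReal
    by_cases hj : (j:ℕ) = 0
    · simp only [dif_pos hj]; fun_prop
    · simp only [dif_neg hj]; fun_prop
  have mpT := measurePreserving_Tmap (m+1) t
  have e2 : (∫⁻ s in Sx, ∏ j : Fin (m+1), ENNReal.ofReal
        ((s j - (if hj : (j:ℕ) = 0 then t else s ⟨(j:ℕ)-1, by omega⟩)) ^ (-(b j))))
      = ∫⁻ u in {u : Fin (m+1) → ℝ | (∀ j, 0 < u j) ∧ ∑ j, u j < h},
          ∏ j : Fin (m+1), ENNReal.ofReal ((u j) ^ (-(b j))) := by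
    rw [← (mpT.restrict_preimage hSxm).lintegral_comp hGm, Tmap_preimage m t h]
    refine lintegral_congr fun u => ?_
    refine Finset.prod_congr rfl fun j _ => ?_
    rw [Tmap_increment m t u j]
  rw [e2, corner_lintegral (m+1) b (fun j => (hb j).2) h hh, ENNReal.toReal_ofReal, mul_div_assoc]
  have hS1 : ∑ j, b j ≤ ((m+1:ℕ):ℝ) := by
    calc ∑ j, b j ≤ ∑ _j : Fin (m+1), (1:ℝ) := Finset.sum_le_sum fun j _ => (hb j).2.le
    _ = ((m+1:ℕ):ℝ) := by simp
  have hGpos : 0 < Real.Gamma (((m+1:ℕ):ℝ) + 1 - ∑ j, b j) :=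
    Real.Gamma_pos_of_pos (by push_cast at hS1 ⊢; linarith)
  refine mul_nonneg (Real.rpow_nonneg hh.le _)
    (div_nonneg (Finset.prod_nonneg fun j _ =>
      (Real.Gamma_pos_of_pos (by linarith [(hb j).2])).le) hGpos.le)
end

section
/- Let Q be a real symmetric positive definite n × n matrix with smallest eigenvalue λ₁(Q), let k₁, …, k_n be nonnegative integers, and set K := k₁ + ⋯ + k_n. Then ∫_{ℝⁿ} (∏_{j=1}^n |x_j|^{k_j}) · exp(−½ xᵀ Q x) dx ≤ (det Q)^{−1/2} · λ₁(Q)^{−K/2} · ∫_{ℝⁿ} ‖ξ‖₂^{K} · exp(−½ ‖ξ‖₂²) dξ, where both integrals are with respect to n-dimensional Lebesgue measure and ‖·‖₂ is the Euclidean norm. -/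
open MeasureTheory
open Matrix
open scoped MatrixOrder

private lemma rayleigh_lower (n : ℕ) (Q : Matrix (Fin n) (Fin n) ℝ) (hQ : Q.PosDef) (c : ℝ)
    (hc : ∀ i, c ≤ hQ.isHermitian.eigenvalues i) (x : Fin n → ℝ) :
    c * (x ⬝ᵥ x) ≤ x ⬝ᵥ Q.mulVec x := by
  have hH := hQ.isHermitian
  have hUU : (hH.eigenvectorUnitary : Matrix (Fin n) (Fin n) ℝ) *
      star (hH.eigenvectorUnitary : Matrix (Fin n) (Fin n) ℝ) = 1 :=
    (Matrix.mem_unitaryGroup_iff).mp hH.eigenvectorUnitary.2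
  set U : Matrix (Fin n) (Fin n) ℝ := (hH.eigenvectorUnitary : Matrix (Fin n) (Fin n) ℝ) with hU
  have hstar : star U = Uᵀ := by
    ext i j
    simp [Matrix.star_eq_conjTranspose, Matrix.conjTranspose_apply]
  have h1 : x ⬝ᵥ Q.mulVec x = (x ᵥ* U) ⬝ᵥ (diagonal hH.eigenvalues).mulVec (x ᵥ* U) := by
    conv_lhs => rw [hH.spectral_theorem, Unitary.conjStarAlgAut_apply]
    rw [← Matrix.mulVec_mulVec, ← Matrix.mulVec_mulVec, Matrix.dotProduct_mulVec x U,
      hstar, Matrix.mulVec_transpose]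
    norm_num [RCLike.ofReal]
  have h2 : (x ᵥ* U) ⬝ᵥ (x ᵥ* U) = x ⬝ᵥ x := by
    nth_rewrite 2 [← Matrix.mulVec_transpose]
    rw [← hstar, ← Matrix.dotProduct_mulVec, Matrix.mulVec_mulVec, hUU, Matrix.one_mulVec]
  rw [h1]
  set y := x ᵥ* U with hy
  have : y ⬝ᵥ (diagonal hH.eigenvalues).mulVec y = ∑ i, hH.eigenvalues i * (y i)^2 := by
    simp [dotProduct, Matrix.mulVec_diagonal]
    exact Finset.sum_congr rfl fun i _ => by ring
  rw [this]
  have h3 : c * (x ⬝ᵥ x) = ∑ i, c * (y i)^2 := by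
    rw [← h2]; simp [dotProduct, Finset.mul_sum]; ring_nf
  rw [h3]
  exact Finset.sum_le_sum fun i _ => mul_le_mul_of_nonneg_right (hc i) (sq_nonneg _)

private lemma gauss_integrable (n K : ℕ) :
    Integrable (fun ξ : Fin n → ℝ =>
      Real.sqrt (∑ i, ξ i ^ 2) ^ K * Real.exp (-(1/2) * ∑ i, ξ i ^ 2)) := by
  have hbint : Integrable (fun ξ : Fin n → ℝ =>
      (K.factorial * Real.exp 1) * ∏ i, Real.exp (-(1/4) * ξ i ^ 2)) := by
    refine Integrable.const_mul ?_ _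
    exact Integrable.fintype_prod (f := fun (_ : Fin n) (x : ℝ) => Real.exp (-(1/4) * x ^ 2))
      (fun i => by simpa using integrable_exp_neg_mul_sq (by norm_num : (0:ℝ) < 1/4))
  refine hbint.mono' ?_ ?_
  · apply Continuous.aestronglyMeasurable
    continuity
  · refine Filter.Eventually.of_forall fun ξ => ?_
    have h0 : (0:ℝ) ≤ ∑ i, ξ i ^ 2 := Finset.sum_nonneg fun i _ => sq_nonneg _
    set r := ∑ i, ξ i ^ 2 with hr
    have hprod : ∏ i, Real.exp (-(1/4) * ξ i ^ 2) = Real.exp (-(1/4) * r) := by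
      rw [← Real.exp_sum, hr, Finset.mul_sum]
    rw [hprod, Real.norm_eq_abs, abs_of_nonneg (by positivity)]
    set t := Real.sqrt r with ht
    have ht0 : 0 ≤ t := Real.sqrt_nonneg _
    have htr : t ^ 2 = r := Real.sq_sqrt h0
    have hK : t ^ K ≤ K.factorial * Real.exp t := by
      have h1 : t ^ K / K.factorial ≤ Real.exp t := by
        refine le_trans ?_ (Real.sum_le_exp_of_nonneg ht0 (K+1))
        exact Finset.single_le_sum (f := fun i => t ^ i / i.factorial)
          (fun i _ => by positivity) (Finset.self_mem_range_succ K)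
      have hKf : (0:ℝ) < K.factorial := by positivity
      calc t ^ K = (t ^ K / K.factorial) * K.factorial := by field_simp
        _ ≤ Real.exp t * K.factorial := mul_le_mul_of_nonneg_right h1 hKf.le
        _ = K.factorial * Real.exp t := by ring
    calc t ^ K * Real.exp (-(1/2) * r)
        ≤ (K.factorial * Real.exp t) * Real.exp (-(1/2) * r) :=
          mul_le_mul_of_nonneg_right hK (Real.exp_nonneg _)
      _ = K.factorial * (Real.exp (t - (1/4) * t^2) * Real.exp (-(1/4) * r)) := by
          rw [htr, ← Real.exp_add, mul_assoc, ← Real.exp_add]; ring_nf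
      _ ≤ K.factorial * (Real.exp 1 * Real.exp (-(1/4) * r)) := by
          refine mul_le_mul_of_nonneg_left (mul_le_mul_of_nonneg_right
            (Real.exp_le_exp.2 (by nlinarith [sq_nonneg (t - 2)])) (Real.exp_nonneg _)) (by positivity)
      _ = K.factorial * Real.exp 1 * Real.exp (-(1/4) * r) := by ring

private lemma cov_integral (n : ℕ) (S : Matrix (Fin n) (Fin n) ℝ) (hS : S.det ≠ 0)
    (g : (Fin n → ℝ) → ℝ) (hg : Continuous g) :
    ∫ x : Fin n → ℝ, g (S.mulVec x) = |S.det|⁻¹ * ∫ ξ, g ξ := by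
  have hmap : Measure.map (toLin' S) (volume : Measure (Fin n → ℝ))
      = ENNReal.ofReal |S.det⁻¹| • volume :=
    Real.map_matrix_volume_pi_eq_smul_volume_pi hS
  have hmeas : Measurable (toLin' S) :=
    (toLin' S).continuous_of_finiteDimensional.measurable
  have h1 : ∫ ξ, g ξ ∂(Measure.map (toLin' S) volume) = ∫ x, g (S.mulVec x) := by
    rw [integral_map hmeas.aemeasurable hg.aestronglyMeasurable]
    simp [Matrix.toLin'_apply]
  rw [← h1, hmap, integral_smul_measure]
  simp [ENNReal.toReal_ofReal, abs_nonneg, abs_inv, smul_eq_mul]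

private lemma cov_integrable (n : ℕ) (S : Matrix (Fin n) (Fin n) ℝ) (hS : S.det ≠ 0)
    (g : (Fin n → ℝ) → ℝ) (hg : Continuous g) (hgi : Integrable g) :
    Integrable (fun x => g (S.mulVec x)) := by
  have hmap : Measure.map (toLin' S) (volume : Measure (Fin n → ℝ))
      = ENNReal.ofReal |S.det⁻¹| • volume :=
    Real.map_matrix_volume_pi_eq_smul_volume_pi hS
  have hmeas : Measurable (toLin' S) :=
    (toLin' S).continuous_of_finiteDimensional.measurable
  have : Integrable g (Measure.map (toLin' S) volume) := by
    rw [hmap]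
    exact hgi.smul_measure ENNReal.ofReal_ne_top
  rw [integrable_map_measure hg.aestronglyMeasurable hmeas.aemeasurable] at this
  simpa [Function.comp_def, Matrix.toLin'_apply] using this

/-- For a real symmetric positive definite `n × n` matrix `Q` with smallest
eigenvalue `λ₁(Q)`, nonnegative integers `k₁, …, kₙ` with `K := k₁ + ⋯ + kₙ`:
`∫_{ℝⁿ} (∏ⱼ |xⱼ|^{kⱼ}) e^{-½ xᵀQx} dx
  ≤ (det Q)^{-1/2} λ₁(Q)^{-K/2} ∫_{ℝⁿ} ‖ξ‖₂^K e^{-½‖ξ‖₂²} dξ`. -/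
theorem gaussian_moment_integral_bound (n : ℕ) (hn : 0 < n)
    (Q : Matrix (Fin n) (Fin n) ℝ) (hsymm : Q.IsSymm) (hQ : Q.PosDef)
    (k : Fin n → ℕ) :
    (∫ x : Fin n → ℝ,
        (∏ j : Fin n, |x j| ^ (k j)) * Real.exp (-(1/2) * dotProduct x (Q.mulVec x)))
      ≤ (Q.det) ^ (-(1/2) : ℝ) *
          (Finset.univ.inf' ⟨⟨0, hn⟩, Finset.mem_univ _⟩ hQ.isHermitian.eigenvalues)
            ^ (-((∑ j, k j : ℕ) : ℝ) / 2) *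
          ∫ ξ : Fin n → ℝ,
            Real.sqrt (∑ i, ξ i ^ 2) ^ (∑ j, k j) *
              Real.exp (-(1/2) * ∑ i, ξ i ^ 2) := by
  classical
  set K := ∑ j, k j with hKdef
  set lam := Finset.univ.inf' ⟨⟨0, hn⟩, Finset.mem_univ _⟩ hQ.isHermitian.eigenvalues with hlamdef
  have hlam : 0 < lam := by
    rw [hlamdef]
    apply (Finset.lt_inf'_iff _).mpr
    exact fun i _ => hQ.eigenvalues_pos i
  have hc : ∀ i, lam ≤ hQ.isHermitian.eigenvalues i := fun i =>
    Finset.inf'_le _ (Finset.mem_univ i)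
  -- square root of Q
  set S := CFC.sqrt Q with hSdef
  have hSH : S.IsHermitian := (CFC.sqrt_nonneg Q).posSemidef.1
  have hST : Sᵀ = S := by
    ext i j
    simpa using congrFun (congrFun hSH i) j
  have hSS : S * S = Q := CFC.sqrt_mul_sqrt_self Q hQ.posSemidef.nonneg
  have hdetsq : S.det * S.det = Q.det := by rw [← Matrix.det_mul, hSS]
  have hdet0 : S.det ≠ 0 := fun h => hQ.det_pos.ne' (by rw [← hdetsq, h, mul_zero])
  have hdetnn : 0 ≤ S.det := by
    rw [(CFC.sqrt_nonneg Q).posSemidef.1.det_eq_prod_eigenvalues]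
    exact Finset.prod_nonneg fun i _ => by
      simpa using (CFC.sqrt_nonneg Q).posSemidef.eigenvalues_nonneg i
  have hdetpos : 0 < S.det := lt_of_le_of_ne hdetnn (Ne.symm hdet0)
  -- key identity
  have key : ∀ x : Fin n → ℝ, ∑ i, (S.mulVec x i) ^ 2 = x ⬝ᵥ Q.mulVec x := by
    intro x
    have h1 : ∑ i, (S.mulVec x i) ^ 2 = (S.mulVec x) ⬝ᵥ (S.mulVec x) := by
      simp [dotProduct, sq]
    rw [h1, Matrix.dotProduct_mulVec, ← Matrix.mulVec_transpose, hST, Matrix.mulVec_mulVec, hSS,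
      dotProduct_comm]
  -- the Gaussian weight function
  set g : (Fin n → ℝ) → ℝ := fun ξ =>
    Real.sqrt (∑ i, ξ i ^ 2) ^ K * Real.exp (-(1/2) * ∑ i, ξ i ^ 2) with hgdef
  have hgcont : Continuous g := by
    rw [hgdef]; continuity
  have hgint : Integrable g := gauss_integrable n K
  set c := lam ^ (-(1:ℝ)/2) with hcdef
  have hcpos : 0 < c := Real.rpow_pos_of_pos hlam _
  have hcsqrt : c = Real.sqrt lam⁻¹ := by
    rw [hcdef, Real.sqrt_eq_rpow, ← Real.rpow_neg_one lam, ← Real.rpow_mul hlam.le]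
    norm_num
  -- pointwise bound
  have ptwise : ∀ x : Fin n → ℝ,
      (∏ j : Fin n, |x j| ^ (k j)) * Real.exp (-(1/2) * x ⬝ᵥ Q.mulVec x)
        ≤ c ^ K * g (S.mulVec x) := by
    intro x
    have hQx0 : 0 ≤ x ⬝ᵥ Q.mulVec x := by simpa using hQ.posSemidef.dotProduct_mulVec_nonneg x
    have hxj : ∀ j, |x j| ≤ c * Real.sqrt (x ⬝ᵥ Q.mulVec x) := by
      intro j
      have h1 : |x j| ≤ Real.sqrt (x ⬝ᵥ x) := by
        rw [show x ⬝ᵥ x = ∑ i, x i ^ 2 by simp [dotProduct, sq]]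
        rw [← Real.sqrt_sq_eq_abs]
        exact Real.sqrt_le_sqrt (Finset.single_le_sum (f := fun i => x i ^ 2)
          (fun i _ => sq_nonneg _) (Finset.mem_univ j))
      have h2 : x ⬝ᵥ x ≤ lam⁻¹ * (x ⬝ᵥ Q.mulVec x) := by
        rw [inv_mul_eq_div, le_div_iff₀ hlam]
        nlinarith [rayleigh_lower n Q hQ lam hc x]
      calc |x j| ≤ Real.sqrt (x ⬝ᵥ x) := h1
        _ ≤ Real.sqrt (lam⁻¹ * (x ⬝ᵥ Q.mulVec x)) := Real.sqrt_le_sqrt h2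
        _ = Real.sqrt lam⁻¹ * Real.sqrt (x ⬝ᵥ Q.mulVec x) := Real.sqrt_mul (by positivity) _
        _ = c * Real.sqrt (x ⬝ᵥ Q.mulVec x) := by rw [hcsqrt]
    have hprod : (∏ j : Fin n, |x j| ^ (k j))
        ≤ ∏ j : Fin n, (c * Real.sqrt (x ⬝ᵥ Q.mulVec x)) ^ (k j) := by
      refine Finset.prod_le_prod (fun j _ => by positivity) fun j _ =>
        pow_le_pow_left₀ (abs_nonneg _) (hxj j) _
    have hprodeq : ∏ j : Fin n, (c * Real.sqrt (x ⬝ᵥ Q.mulVec x)) ^ (k j)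
        = c ^ K * Real.sqrt (x ⬝ᵥ Q.mulVec x) ^ K := by
      rw [Finset.prod_pow_eq_pow_sum, ← hKdef, mul_pow]
    have hgx : g (S.mulVec x)
        = Real.sqrt (x ⬝ᵥ Q.mulVec x) ^ K * Real.exp (-(1/2) * (x ⬝ᵥ Q.mulVec x)) := by
      rw [hgdef]; simp only [key x]
    rw [hgx]
    calc (∏ j : Fin n, |x j| ^ (k j)) * Real.exp (-(1/2) * x ⬝ᵥ Q.mulVec x)
        ≤ (c ^ K * Real.sqrt (x ⬝ᵥ Q.mulVec x) ^ K) * Real.exp (-(1/2) * x ⬝ᵥ Q.mulVec x) := by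
          refine mul_le_mul_of_nonneg_right ?_ (Real.exp_nonneg _)
          rw [← hprodeq]; exact hprod
      _ = c ^ K * (Real.sqrt (x ⬝ᵥ Q.mulVec x) ^ K * Real.exp (-(1/2) * (x ⬝ᵥ Q.mulVec x))) := by
          ring
  -- integrability
  have hgcomp : Integrable (fun x => g (S.mulVec x)) := cov_integrable n S hdet0 g hgcont hgint
  have hbint : Integrable (fun x => c ^ K * g (S.mulVec x)) := hgcomp.const_mul _
  have hFcont : Continuous (fun x : Fin n → ℝ =>
      (∏ j : Fin n, |x j| ^ (k j)) * Real.exp (-(1/2) * x ⬝ᵥ Q.mulVec x)) := by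
    apply Continuous.mul
    · exact continuous_finset_prod _ fun j _ => ((continuous_apply j).abs).pow _
    · apply Real.continuous_exp.comp
      apply Continuous.mul continuous_const
      simp only [dotProduct, Matrix.mulVec]
      exact continuous_finset_sum _ fun i _ => (continuous_apply i).mul
        (continuous_finset_sum _ fun j _ => (continuous_const.mul (continuous_apply j)))
  have hFint : Integrable (fun x : Fin n → ℝ =>
      (∏ j : Fin n, |x j| ^ (k j)) * Real.exp (-(1/2) * x ⬝ᵥ Q.mulVec x)) := by
    refine hbint.mono' hFcont.aestronglyMeasurable ?_
    refine Filter.Eventually.of_forall fun x => ?_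
    rw [Real.norm_eq_abs, abs_of_nonneg (by positivity)]
    exact ptwise x
  -- conclude
  have hint : (∫ x : Fin n → ℝ,
      (∏ j : Fin n, |x j| ^ (k j)) * Real.exp (-(1/2) * x ⬝ᵥ Q.mulVec x))
      ≤ ∫ x : Fin n → ℝ, c ^ K * g (S.mulVec x) :=
    integral_mono hFint hbint ptwise
  have hcov : ∫ x : Fin n → ℝ, c ^ K * g (S.mulVec x)
      = c ^ K * (S.det⁻¹ * ∫ ξ, g ξ) := by
    rw [MeasureTheory.integral_const_mul, cov_integral n S hdet0 g hgcont, abs_of_pos hdetpos]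
  -- rewrite the scalars
  have hdetr : (Q.det) ^ (-(1/2) : ℝ) = S.det⁻¹ := by
    rw [← hdetsq, ← sq, ← Real.rpow_natCast S.det 2, ← Real.rpow_mul hdetnn]
    norm_num
    exact Real.rpow_neg_one S.det
  have hlamr : lam ^ (-(K:ℝ)/2) = c ^ K := by
    rw [hcdef, ← Real.rpow_natCast (lam ^ (-(1:ℝ)/2)) K, ← Real.rpow_mul hlam.le]
    congr 1
    ring
  calc (∫ x : Fin n → ℝ,
      (∏ j : Fin n, |x j| ^ (k j)) * Real.exp (-(1/2) * x ⬝ᵥ Q.mulVec x))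
      ≤ ∫ x : Fin n → ℝ, c ^ K * g (S.mulVec x) := hint
    _ = c ^ K * (S.det⁻¹ * ∫ ξ, g ξ) := hcov
    _ = (Q.det) ^ (-(1/2) : ℝ) * lam ^ (-(K:ℝ)/2) * ∫ ξ, g ξ := by
        rw [hdetr, hlamr]; ring
end
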